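/- Let R be a real random variable with density f_R(r) = 2π λ_M r exp(−π λ_M r²) for r > 0 (λ_M > 0), define P_C = min{P_max^C, P_o β^{−η} R^{η α_M}} with P_o, P_max^C, β > 0, α_M > 0, η ∈ (0,1], r_o = (P_max^C/P_o)^{1/(α_M η)} β^{1/α_M}, and let t > 0 and r > 0. Then E[ 1/(1 + t P_C β r^{−α_M}) ] = e^{−π λ_M r_o²}/(1 + t P_max^C β r^{−α_M}) + ∫₀^{π λ_M r_o²} ( e^{ν} + e^{ν} t P_o β^{1−η} (ν/(π λ_M))^{η α_M/2} r^{−α_M} )^{−1} dν. -/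

import Mathlib

open MeasureTheory Set intervalIntegral Filter
open scoped NNReal ENNReal

lemma hasDerivAt_neg_exp_sq (a x : ℝ) :
    HasDerivAt (fun s : ℝ => -Real.exp (-(a * s ^ 2))) (2 * a * x * Real.exp (-(a * x ^ 2))) x := by
  have h1 : HasDerivAt (fun s : ℝ => -(a * s ^ 2)) (-(a * (2 * x))) x := by
    simpa using ((hasDerivAt_pow 2 x).const_mul a).fun_neg
  have h2 := (Real.hasDerivAt_exp (-(a * x ^ 2))).comp x h1
  convert! h2.fun_neg using 1
  ring

lemma tendsto_neg_exp_sq (a : ℝ) (ha : 0 < a) :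
    Tendsto (fun s : ℝ => -Real.exp (-(a * s ^ 2))) atTop (nhds 0) := by
  have h1 : Tendsto (fun s : ℝ => a * s ^ 2) atTop atTop :=
    (tendsto_pow_atTop two_ne_zero).const_mul_atTop ha
  have h2 : Tendsto (fun s : ℝ => -(a * s ^ 2)) atTop atBot :=
    tendsto_neg_atTop_atBot.comp h1
  have h3 := Real.tendsto_exp_atBot.comp h2
  simpa using h3.neg

lemma tail_integrable (a b : ℝ) (ha : 0 < a) (hb : 0 ≤ b) :
    IntegrableOn (fun s => 2 * a * s * Real.exp (-(a * s ^ 2))) (Ioi b) := by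
  apply integrableOn_Ioi_deriv_of_nonneg (g := fun s : ℝ => -Real.exp (-(a * s ^ 2)))
  · exact ((Real.continuous_exp.comp (by continuity)).neg).continuousWithinAt
  · exact fun x _ => hasDerivAt_neg_exp_sq a x
  · intro x hx
    have hx0 : 0 < x := lt_of_le_of_lt hb hx
    positivity
  · exact tendsto_neg_exp_sq a ha

lemma tail_integral (a b : ℝ) (ha : 0 < a) (hb : 0 ≤ b) :
    ∫ s in Ioi b, 2 * a * s * Real.exp (-(a * s ^ 2)) = Real.exp (-(a * b ^ 2)) := by
  have := integral_Ioi_of_hasDerivAt_of_nonneg (g := fun s : ℝ => -Real.exp (-(a * s ^ 2)))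
    (g' := fun s => 2 * a * s * Real.exp (-(a * s ^ 2)))
    (((Real.continuous_exp.comp (by continuity)).neg).continuousWithinAt)
    (fun x _ => hasDerivAt_neg_exp_sq a x)
    (fun x hx => by have hx0 : 0 < x := lt_of_le_of_lt hb hx; positivity)
    (tendsto_neg_exp_sq a ha)
  simpa using this

/-- The quantity `Υ₁` appearing in `Ξ₁(t)` (equation (9)) of Theorem 1 of the paper: with the
Rayleigh nearest-distance density and the open-loop power control
`P_C = min{P_max^C, P_o β^{−η} R^{η α_M}}`, `r_o = (P_max^C/P_o)^{1/(α_M η)} β^{1/α_M}`,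
for `t > 0` and `r > 0`,
`E[1/(1 + t P_C β r^{−α_M})] = e^{−π λ_M r_o²}/(1 + t P_max^C β r^{−α_M})
  + ∫₀^{π λ_M r_o²} (e^ν + e^ν t P_o β^{1−η} (ν/(π λ_M))^{η α_M/2} r^{−α_M})^{−1} dν`. -/
theorem cellular_interferer_laplace {Ω : Type*} [MeasurableSpace Ω]
    (μ : Measure Ω) [IsProbabilityMeasure μ]
    (R : Ω → ℝ) (hR : Measurable R)
    (lamM : ℝ) (hlam : 0 < lamM)
    (hdist : Measure.map R μ = (volume : Measure ℝ).withDensity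
      (fun s => ENNReal.ofReal
        (if 0 < s then 2 * Real.pi * lamM * s * Real.exp (-(Real.pi * lamM * s ^ 2)) else 0)))
    (Po PmaxC β αM η : ℝ) (hPo : 0 < Po) (hPmax : 0 < PmaxC) (hβ : 0 < β) (hαM : 0 < αM)
    (hη : 0 < η) (hη1 : η ≤ 1)
    (PC : Ω → ℝ) (hPC : ∀ ω, PC ω = min PmaxC (Po * β ^ (-η) * R ω ^ (η * αM)))
    (ro : ℝ) (hro : ro = (PmaxC / Po) ^ (1 / (αM * η)) * β ^ (1 / αM))
    (t r : ℝ) (ht : 0 < t) (hr : 0 < r) :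
    ∫ ω, 1 / (1 + t * PC ω * β * r ^ (-αM)) ∂μ
      = Real.exp (-(Real.pi * lamM * ro ^ 2)) / (1 + t * PmaxC * β * r ^ (-αM))
        + ∫ ν in (0:ℝ)..(Real.pi * lamM * ro ^ 2),
            (Real.exp ν + Real.exp ν * t * Po * β ^ (1 - η)
              * (ν / (Real.pi * lamM)) ^ (η * αM / 2) * r ^ (-αM))⁻¹ := by
  set a : ℝ := Real.pi * lamM with ha_def
  have ha : 0 < a := by positivity
  set p : ℝ := η * αM with hp_def
  have hp : 0 < p := by positivity
  set K : ℝ := r ^ (-αM) with hK_def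
  have hK : 0 < K := Real.rpow_pos_of_pos hr _
  set c : ℝ := t * Po * β ^ (1 - η) * K with hc_def
  have hc : 0 < c := by positivity
  have hro_pos : 0 < ro := by
    rw [hro]; positivity
  -- the critical identity : Po β^{-η} ro^p = PmaxC
  have hrop : Po * β ^ (-η) * ro ^ p = PmaxC := by
    have h1 : ro ^ p = (PmaxC / Po) * β ^ η := by
      rw [hro, Real.mul_rpow (by positivity) (by positivity),
        ← Real.rpow_mul (by positivity), ← Real.rpow_mul hβ.le]
      have e1 : 1 / (αM * η) * p = 1 := by rw [hp_def]; field_simp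
      have e2 : 1 / αM * p = η := by rw [hp_def]; field_simp
      rw [e1, e2, Real.rpow_one]
    rw [h1, Real.rpow_neg hβ.le]
    have hβη : β ^ η ≠ 0 := ne_of_gt (Real.rpow_pos_of_pos hβ _)
    field_simp
  have hβsub : β ^ (1 - η) = β * β ^ (-η) := by
    rw [show (1 - η : ℝ) = 1 + (-η) by ring, Real.rpow_add hβ, Real.rpow_one]
  -- define g and f
  set g : ℝ → ℝ := fun s => 1 / (1 + t * min PmaxC (Po * β ^ (-η) * s ^ p) * β * K) with hg_def
  set f : ℝ → ℝ := fun s => 2 * a * s * Real.exp (-(a * s ^ 2)) with hf_def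
  have hminmeas : Measurable fun s : ℝ => min PmaxC (Po * β ^ (-η) * s ^ p) :=
    measurable_const.min (((measurable_id.pow_const _).const_mul _))
  have hg_meas : Measurable g := by
    rw [hg_def]
    exact measurable_const.div
      (((((hminmeas.const_mul t)).mul_const β).mul_const K).const_add 1)
  -- Step 1: rewrite LHS as an integral over ℝ against the density
  have step1 : ∫ ω, 1 / (1 + t * PC ω * β * r ^ (-αM)) ∂μ
      = ∫ s in Ioi (0:ℝ), f s * g s := by
    have e0 : ∫ ω, 1 / (1 + t * PC ω * β * r ^ (-αM)) ∂μ = ∫ ω, g (R ω) ∂μ := by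
      refine integral_congr_ae (Eventually.of_forall fun ω => ?_)
      simp only [hg_def, hPC, hK_def]
    have hD_meas : Measurable fun s : ℝ =>
        Real.toNNReal (if 0 < s then 2 * Real.pi * lamM * s * Real.exp (-(a * s ^ 2)) else 0) := by
      apply Measurable.real_toNNReal
      apply Measurable.ite (measurableSet_Ioi (a := (0:ℝ))) ?_ measurable_const
      fun_prop
    rw [e0, ← integral_map hR.aemeasurable hg_meas.aestronglyMeasurable, hdist]
    have hof : (fun s : ℝ => ENNReal.ofReal
          (if 0 < s then 2 * Real.pi * lamM * s * Real.exp (-(a * s ^ 2)) else 0))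
        = fun s : ℝ => ((Real.toNNReal
          (if 0 < s then 2 * Real.pi * lamM * s * Real.exp (-(a * s ^ 2)) else 0) : ℝ≥0) : ℝ≥0∞) :=
      by funext s; rfl
    rw [hof, integral_withDensity_eq_integral_smul hD_meas g]
    rw [← MeasureTheory.integral_indicator measurableSet_Ioi]
    refine integral_congr_ae (Eventually.of_forall fun s => ?_)
    by_cases hs : 0 < s
    · have hnn : 0 ≤ 2 * Real.pi * lamM * s * Real.exp (-(Real.pi * lamM * s ^ 2)) := by
        positivity
      simp only [hs, if_true, indicator_of_mem (mem_Ioi.mpr hs)]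
      rw [NNReal.smul_def, Real.coe_toNNReal _ hnn, hf_def, ha_def, smul_eq_mul]
      ring
    · simp only [hs, if_false, indicator_of_notMem (fun h => hs (mem_Ioi.mp h))]
      simp
  -- pointwise min facts
  have hPoβ : (0:ℝ) < Po * β ^ (-η) := by positivity
  have hmin_tail : ∀ s : ℝ, ro ≤ s → min PmaxC (Po * β ^ (-η) * s ^ p) = PmaxC := by
    intro s hs
    apply min_eq_left
    calc PmaxC = Po * β ^ (-η) * ro ^ p := hrop.symm
      _ ≤ Po * β ^ (-η) * s ^ p :=
          mul_le_mul_of_nonneg_left (Real.rpow_le_rpow hro_pos.le hs hp.le) hPoβ.le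
  have hmin_head : ∀ s : ℝ, 0 < s → s ≤ ro →
      min PmaxC (Po * β ^ (-η) * s ^ p) = Po * β ^ (-η) * s ^ p := by
    intro s hs0 hs
    apply min_eq_right
    calc Po * β ^ (-η) * s ^ p
        ≤ Po * β ^ (-η) * ro ^ p :=
          mul_le_mul_of_nonneg_left (Real.rpow_le_rpow hs0.le hs hp.le) hPoβ.le
      _ = PmaxC := hrop
  -- tail
  have htail_eqon : EqOn (fun s => f s * g s)
      (fun s => f s * (1 / (1 + t * PmaxC * β * K))) (Ioi ro) := by
    intro s hs
    simp only [hg_def]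
    rw [hmin_tail s (le_of_lt hs)]
  have htail_int : IntegrableOn (fun s => f s * g s) (Ioi ro) := by
    have h1 : IntegrableOn (fun s => f s * (1 / (1 + t * PmaxC * β * K))) (Ioi ro) := by
      simpa only [hf_def, IntegrableOn] using
        (tail_integrable a ro ha hro_pos.le).mul_const (1 / (1 + t * PmaxC * β * K))
    exact h1.congr_fun (fun s hs => (htail_eqon hs).symm) measurableSet_Ioi
  have htail_val : ∫ s in Ioi ro, f s * g s
      = Real.exp (-(a * ro ^ 2)) / (1 + t * PmaxC * β * K) := by
    rw [setIntegral_congr_fun measurableSet_Ioi htail_eqon, MeasureTheory.integral_mul_const]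
    simp only [hf_def]
    rw [tail_integral a ro ha hro_pos.le, mul_one_div]
  -- head
  have hhead_eqon : EqOn (fun s => f s * g s)
      (fun s => 2 * a * s * Real.exp (-(a * s ^ 2)) * (1 + c * s ^ p)⁻¹) (Ioc 0 ro) := by
    intro s hs
    simp only [hg_def, hf_def]
    rw [hmin_head s hs.1 hs.2, one_div]
    have e : t * (Po * β ^ (-η) * s ^ p) * β * K = c * s ^ p := by
      rw [hc_def, hβsub]; ring
    rw [e]
  have hcont_den : ContinuousOn (fun s : ℝ => (1 + c * s ^ p)⁻¹) (Icc 0 ro) := by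
    apply ContinuousOn.inv₀
    · exact (continuous_const.add
        (continuous_const.mul (Real.continuous_rpow_const hp.le))).continuousOn
    · intro s hs
      have h1 : 0 ≤ s ^ p := Real.rpow_nonneg hs.1 p
      have h2 : 0 ≤ c * s ^ p := mul_nonneg hc.le h1
      exact ne_of_gt (by linarith)
  have hhead_cont : ContinuousOn
      (fun s : ℝ => 2 * a * s * Real.exp (-(a * s ^ 2)) * (1 + c * s ^ p)⁻¹) (Icc 0 ro) :=
    (Continuous.continuousOn (by fun_prop)).mul hcont_den
  have hhead_int : IntegrableOn (fun s => f s * g s) (Ioc 0 ro) := by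
    have h1 : IntegrableOn
        (fun s : ℝ => 2 * a * s * Real.exp (-(a * s ^ 2)) * (1 + c * s ^ p)⁻¹)
        (Ioc 0 ro) volume :=
      (hhead_cont.integrableOn_Icc).mono_set Ioc_subset_Icc_self
    exact h1.congr_fun (fun s hs => (hhead_eqon hs).symm) measurableSet_Ioc
  -- assemble
  rw [step1, ← Ioc_union_Ioi_eq_Ioi hro_pos.le,
    setIntegral_union (Ioc_disjoint_Ioi le_rfl) measurableSet_Ioi hhead_int htail_int,
    htail_val, add_comm]
  congr 1
  -- head computation via substitution ν = a s²
  calc ∫ s in Ioc 0 ro, f s * g s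
      = ∫ s in Ioc 0 ro, 2 * a * s * Real.exp (-(a * s ^ 2)) * (1 + c * s ^ p)⁻¹ :=
        setIntegral_congr_fun measurableSet_Ioc hhead_eqon
    _ = ∫ s in (0:ℝ)..ro, 2 * a * s * Real.exp (-(a * s ^ 2)) * (1 + c * s ^ p)⁻¹ :=
        (intervalIntegral.integral_of_le hro_pos.le).symm
    _ = ∫ s in (0:ℝ)..ro, (2 * a * s) •
          ((fun u => Real.exp (-u) * (1 + c * (u / a) ^ (p / 2))⁻¹) ∘ (fun s => a * s ^ 2)) s := by
        apply intervalIntegral.integral_congr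
        intro x hx
        rw [uIcc_of_le hro_pos.le] at hx
        have hx0 : 0 ≤ x := hx.1
        simp only [Function.comp, smul_eq_mul]
        have e1 : a * x ^ 2 / a = x ^ 2 := by field_simp
        have e2 : (x ^ 2 : ℝ) ^ (p / 2) = x ^ p := by
          rw [← Real.rpow_natCast x 2, ← Real.rpow_mul hx0]
          norm_num
          congr 1
          ring
        rw [e1, e2]
        ring
    _ = ∫ u in (a * 0 ^ 2)..(a * ro ^ 2), Real.exp (-u) * (1 + c * (u / a) ^ (p / 2))⁻¹ := by
        apply intervalIntegral.integral_comp_smul_deriv'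
        · intro x _
          have h := (hasDerivAt_pow 2 x).const_mul a
          convert! h using 1
          ring
        · exact (continuous_const.mul continuous_id).continuousOn
        · have himg : ((fun s : ℝ => a * s ^ 2) '' uIcc 0 ro) ⊆ Ici 0 := by
            rintro u ⟨x, -, rfl⟩
            have : (0:ℝ) ≤ x ^ 2 := sq_nonneg x
            simp only [mem_Ici]
            positivity
          apply ContinuousOn.mono ?_ himg
          apply ContinuousOn.mul
          · exact (Real.continuous_exp.comp continuous_neg).continuousOn
          · apply ContinuousOn.inv₀
            · exact (continuous_const.add (continuous_const.mul
                ((Real.continuous_rpow_const (by positivity)).comp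
                  (continuous_id.div_const a)))).continuousOn
            · intro u hu
              have h1 : 0 ≤ (u / a) ^ (p / 2) :=
                Real.rpow_nonneg (div_nonneg hu ha.le) _
              have h2 : 0 ≤ c * (u / a) ^ (p / 2) := mul_nonneg hc.le h1
              exact ne_of_gt (by linarith)
    _ = ∫ ν in (0:ℝ)..(a * ro ^ 2),
          (Real.exp ν + Real.exp ν * t * Po * β ^ (1 - η) * (ν / a) ^ (p / 2) * K)⁻¹ := by
        rw [show a * 0 ^ 2 = (0:ℝ) by ring]
        apply intervalIntegral.integral_congr
        intro ν _
        beta_reduce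
        rw [show Real.exp ν + Real.exp ν * t * Po * β ^ (1 - η) * (ν / a) ^ (p / 2) * K
            = Real.exp ν * (1 + c * (ν / a) ^ (p / 2)) by rw [hc_def]; ring,
          mul_inv, ← Real.exp_neg]
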